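/- The limit as n → ∞ of (∑_{i+j+k=n, i,j,k≥1} a(i)a(j)a(k)) / a(n) equals 25/243, where a(n) = 2(4n+1)!/((n+1)!(3n+2)!). -/

import Mathlib

open Filter Finset

noncomputable def a (n : ℕ) : ℝ :=
  2 * (Nat.factorial (4 * n + 1)) / ((Nat.factorial (n + 1)) * (Nat.factorial (3 * n + 2)))

noncomputable def A (p n : ℕ) : ℝ :=
  if p = 0 then (if n = 0 then 1 else 0)
  else p * (Nat.factorial (4 * n + p - 1)) / (Nat.factorial n * Nat.factorial (3 * n + p))

lemma A_eq (p n : ℕ) (hp : p ≠ 0) :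
    A p n = p * (Nat.factorial (4 * n + p - 1)) / (Nat.factorial n * Nat.factorial (3 * n + p)) := by
  simp [A, hp]

lemma A_zero (n : ℕ) : A 0 n = if n = 0 then 1 else 0 := by simp [A]

lemma fact_pos' (m : ℕ) : (0:ℝ) < (Nat.factorial m : ℝ) := by
  exact_mod_cast Nat.factorial_pos m

lemma fcast (m : ℕ) : ((Nat.factorial (m+1) : ℝ)) = (m+1) * (Nat.factorial m) := by
  push_cast [Nat.factorial_succ]; ring

lemma A_p0 (p : ℕ) : A p 0 = 1 := by
  rcases Nat.eq_zero_or_pos p with h | h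
  · simp [A, h]
  · obtain ⟨q, rfl⟩ : ∃ q, p = q + 1 := ⟨p - 1, by omega⟩
    rw [A_eq _ _ (by omega)]
    have h1 : 4 * 0 + (q + 1) - 1 = q := by omega
    have h2 : 3 * 0 + (q + 1) = q + 1 := by omega
    rw [h1, h2, fcast]
    rw [div_eq_one_iff_eq (by positivity)]
    push_cast [Nat.factorial_zero]; ring

lemma A_rec (p n : ℕ) : A (p+1) (n+1) = A p (n+1) + A (p+4) n := by
  rcases Nat.eq_zero_or_pos p with rfl | hp
  · rw [A_eq 1 (n+1) (by omega), A_eq 4 n (by omega), A_zero]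
    simp only [Nat.succ_ne_zero, if_false, zero_add]
    have h1 : 4 * (n+1) + 1 - 1 = (4*n+3) + 1 := by omega
    have h2 : 3 * (n+1) + 1 = 3 * n + 4 := by omega
    have h3 : 4 * n + 4 - 1 = 4 * n + 3 := by omega
    rw [h1, h2, h3, fcast (4*n+3), fcast n]
    have e1 := (fact_pos' n).ne'
    have e2 := (fact_pos' (4*n+3)).ne'
    have e3 := (fact_pos' (3*n+4)).ne'
    field_simp
    push_cast; ring
  · obtain ⟨q, rfl⟩ : ∃ q, p = q + 1 := ⟨p - 1, by omega⟩
    have hq1 : q + 1 + 1 = q + 2 := by omega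
    have hq2 : q + 1 + 4 = q + 5 := by omega
    rw [hq1, hq2, A_eq (q+2) (n+1) (by omega), A_eq (q+1) (n+1) (by omega),
      A_eq (q+5) n (by omega)]
    have h1 : 4 * (n+1) + (q+2) - 1 = (4*n+q+4) + 1 := by omega
    have h2 : 3 * (n+1) + (q+2) = (3*n+q+4) + 1 := by omega
    have h3 : 4 * (n+1) + (q+1) - 1 = 4*n+q+4 := by omega
    have h4 : 3 * (n+1) + (q+1) = 3*n+q+4 := by omega
    have h5 : 4 * n + (q+5) - 1 = 4*n+q+4 := by omega
    have h6 : 3 * n + (q+5) = (3*n+q+4) + 1 := by omega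
    rw [h1, h2, h3, h4, h5, h6, fcast (4*n+q+4), fcast (3*n+q+4), fcast n]
    have e1 := (fact_pos' n).ne'
    have e2 := (fact_pos' (4*n+q+4)).ne'
    have e3 := (fact_pos' (3*n+q+4)).ne'
    field_simp
    push_cast; ring

lemma A_zero_ne (k : ℕ) (hk : k ≠ 0) : A 0 k = 0 := by simp [A, hk]

lemma A_conv (n : ℕ) : ∀ p q : ℕ, (∑ k ∈ Finset.range (n+1), A p k * A q (n - k)) = A (p+q) n := by
  induction n using Nat.strong_induction_on with
  | _ n ih =>
    intro p q
    rcases n with _ | m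
    · simp [A_p0]
    · induction p with
      | zero =>
        rw [Finset.sum_eq_single 0]
        · simp [A_p0, A_zero]
        · intro k _ hk; rw [A_zero_ne k hk, zero_mul]
        · intro h; exact absurd (Finset.mem_range.2 (by omega)) h
      | succ p ihp =>
        have hsplit : ∀ k, A (p+1) k = A p k + (if k = 0 then 0 else A (p+4) (k-1)) := by
          intro k
          rcases k with _ | j
          · simp [A_p0]
          · simp only [Nat.succ_ne_zero, if_false]
            exact A_rec p j
        calc (∑ k ∈ Finset.range (m+1+1), A (p+1) k * A q (m+1 - k))
            = ∑ k ∈ Finset.range (m+1+1),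
                (A p k * A q (m+1-k) + (if k = 0 then 0 else A (p+4) (k-1)) * A q (m+1-k)) := by
              refine Finset.sum_congr rfl fun k _ => ?_
              rw [hsplit k, add_mul]
          _ = (∑ k ∈ Finset.range (m+1+1), A p k * A q (m+1-k))
              + ∑ k ∈ Finset.range (m+1+1), (if k = 0 then 0 else A (p+4) (k-1)) * A q (m+1-k) := by
              rw [Finset.sum_add_distrib]
          _ = A (p+q) (m+1) + A (p+4+q) m := by
              rw [ihp]
              congr 1
              rw [Finset.sum_range_succ']
              simp only [Nat.succ_ne_zero, if_false, if_true, zero_mul, add_zero, reduceIte]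
              have hms : ∀ i : ℕ, m + 1 - (i + 1) = m - i := fun i => by omega
              calc (∑ i ∈ Finset.range (m+1), A (p+4) (i+1-1) * A q (m+1-(i+1)))
                  = ∑ i ∈ Finset.range (m+1), A (p+4) i * A q (m-i) := by
                    refine Finset.sum_congr rfl fun i _ => ?_
                    rw [hms i]; norm_num
                _ = A (p+4+q) m := ih m (by omega) (p+4) q
          _ = A (p+1+q) (m+1) := by
              have h1 : p+1+q = (p+q)+1 := by omega
              have h2 : p+4+q = (p+q)+4 := by omega
              rw [h1, h2, A_rec (p+q) m]

noncomputable def u (n : ℕ) : ℝ := 2 * A 2 n - A 3 n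
noncomputable def c2 (n : ℕ) : ℝ := ∑ k ∈ Finset.range (n+1), u k * u (n-k)
noncomputable def c3 (n : ℕ) : ℝ := ∑ k ∈ Finset.range (n+1), u k * c2 (n-k)

lemma ha (n : ℕ) : a n = u n := by
  unfold a u
  rw [A_eq 2 n (by omega), A_eq 3 n (by omega)]
  have h1 : 4*n+2-1 = 4*n+1 := by omega
  have h2 : 4*n+3-1 = (4*n+1)+1 := by omega
  have h3 : 3*n+3 = (3*n+2)+1 := by omega
  rw [h1, h2, h3, fcast (4*n+1), fcast (3*n+2), fcast n]
  have e1 := (fact_pos' n).ne'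
  have e2 := (fact_pos' (4*n+1)).ne'
  have e3 := (fact_pos' (3*n+2)).ne'
  field_simp
  push_cast; ring

lemma u0 : u 0 = 1 := by simp [u, A_p0]; norm_num

lemma c2_zero : c2 0 = 1 := by simp [c2, u0]

lemma c2_eq (n : ℕ) : c2 n = 4 * A 4 n - 4 * A 5 n + A 6 n := by
  have e22 := A_conv n 2 2
  have e23 := A_conv n 2 3
  have e32 := A_conv n 3 2
  have e33 := A_conv n 3 3
  norm_num at e22 e23 e32 e33
  unfold c2 u
  calc ∑ k ∈ Finset.range (n+1), (2*A 2 k - A 3 k)*(2*A 2 (n-k) - A 3 (n-k))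
      = 4*(∑ k ∈ Finset.range (n+1), A 2 k * A 2 (n-k))
        - 2*(∑ k ∈ Finset.range (n+1), A 2 k * A 3 (n-k))
        - 2*(∑ k ∈ Finset.range (n+1), A 3 k * A 2 (n-k))
        + (∑ k ∈ Finset.range (n+1), A 3 k * A 3 (n-k)) := by
        rw [Finset.mul_sum, Finset.mul_sum, Finset.mul_sum, ← Finset.sum_sub_distrib,
          ← Finset.sum_sub_distrib, ← Finset.sum_add_distrib]
        exact Finset.sum_congr rfl fun k _ => by ring
    _ = 4 * A 4 n - 4 * A 5 n + A 6 n := by rw [e22, e23, e32, e33]; ring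

lemma c3_eq (n : ℕ) : c3 n = 8 * A 6 n - 12 * A 7 n + 6 * A 8 n - A 9 n := by
  have e24 := A_conv n 2 4
  have e25 := A_conv n 2 5
  have e26 := A_conv n 2 6
  have e34 := A_conv n 3 4
  have e35 := A_conv n 3 5
  have e36 := A_conv n 3 6
  norm_num at e24 e25 e26 e34 e35 e36
  unfold c3 u
  calc ∑ k ∈ Finset.range (n+1), (2*A 2 k - A 3 k) * c2 (n-k)
      = ∑ k ∈ Finset.range (n+1), (2*A 2 k - A 3 k) * (4 * A 4 (n-k) - 4 * A 5 (n-k) + A 6 (n-k)) := by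
        exact Finset.sum_congr rfl fun k _ => by rw [c2_eq]
    _ = 8*(∑ k ∈ Finset.range (n+1), A 2 k * A 4 (n-k))
        - 8*(∑ k ∈ Finset.range (n+1), A 2 k * A 5 (n-k))
        + 2*(∑ k ∈ Finset.range (n+1), A 2 k * A 6 (n-k))
        - 4*(∑ k ∈ Finset.range (n+1), A 3 k * A 4 (n-k))
        + 4*(∑ k ∈ Finset.range (n+1), A 3 k * A 5 (n-k))
        - (∑ k ∈ Finset.range (n+1), A 3 k * A 6 (n-k)) := by
        rw [Finset.mul_sum, Finset.mul_sum, Finset.mul_sum, Finset.mul_sum, Finset.mul_sum,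
          ← Finset.sum_sub_distrib, ← Finset.sum_add_distrib, ← Finset.sum_sub_distrib,
          ← Finset.sum_add_distrib, ← Finset.sum_sub_distrib]
        exact Finset.sum_congr rfl fun k _ => by ring
    _ = 8 * A 6 n - 12 * A 7 n + 6 * A 8 n - A 9 n := by
        rw [e24, e25, e26, e34, e35, e36]; ring

lemma sum_split (f : ℕ → ℝ) (n : ℕ) (hn : 1 ≤ n) :
    ∑ k ∈ Finset.range (n+1), f k = f 0 + (∑ k ∈ Finset.Ico 1 n, f k) + f n := by
  rw [Finset.sum_range_succ, Finset.range_eq_Ico, Finset.sum_eq_sum_Ico_succ_bot (by omega)]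

lemma uu_Ico (m : ℕ) (hm : 1 ≤ m) :
    ∑ j ∈ Finset.Ico 1 m, u j * u (m-j) = c2 m - 2 * u m := by
  have h := sum_split (fun j => u j * u (m-j)) m hm
  unfold c2 at *
  simp only [Nat.sub_zero, Nat.sub_self, u0, one_mul, mul_one] at h
  rw [h]; ring

lemma uc_Ico (n : ℕ) (hn : 1 ≤ n) :
    ∑ i ∈ Finset.Ico 1 n, u i * c2 (n-i) = c3 n - c2 n - u n := by
  have h := sum_split (fun i => u i * c2 (n-i)) n hn
  unfold c3 at *
  simp only [Nat.sub_zero, Nat.sub_self, u0, c2_zero, one_mul, mul_one] at h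
  rw [h]; ring

lemma T_eq (n : ℕ) (hn : 1 ≤ n) :
    (∑ i ∈ Finset.Ico 1 n, ∑ j ∈ Finset.Ico 1 (n - i), a i * a j * a (n - i - j))
      = 6*A 2 n - 3*A 3 n - 12*A 4 n + 12*A 5 n + 5*A 6 n - 12*A 7 n + 6*A 8 n - A 9 n := by
  have step1 : ∀ i ∈ Finset.Ico 1 n,
      (∑ j ∈ Finset.Ico 1 (n - i), a i * a j * a (n - i - j))
        = u i * c2 (n-i) - 2 * (u i * u (n-i)) := by
    intro i hi
    rw [Finset.mem_Ico] at hi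
    have hni : 1 ≤ n - i := by omega
    calc (∑ j ∈ Finset.Ico 1 (n - i), a i * a j * a (n - i - j))
        = u i * ∑ j ∈ Finset.Ico 1 (n - i), u j * u ((n-i) - j) := by
          rw [Finset.mul_sum]
          exact Finset.sum_congr rfl fun j _ => by rw [ha, ha, ha]; ring
      _ = u i * (c2 (n-i) - 2 * u (n-i)) := by rw [uu_Ico _ hni]
      _ = u i * c2 (n-i) - 2 * (u i * u (n-i)) := by ring
  rw [Finset.sum_congr rfl step1, Finset.sum_sub_distrib]
  rw [uc_Ico n hn]
  have h2 : ∑ i ∈ Finset.Ico 1 n, 2 * (u i * u (n-i))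
      = 2 * (c2 n - 2 * u n) := by
    rw [← Finset.mul_sum, uu_Ico n hn]
  rw [h2, c3_eq, c2_eq]
  unfold u
  ring

lemma fe1 (m : ℕ) : ((Nat.factorial (m+1) : ℝ)) = ((m:ℝ)+1) * (Nat.factorial m : ℝ) := by
  exact fcast m

lemma fe2 (m : ℕ) : ((Nat.factorial (m+2) : ℝ)) = ((m:ℝ)+1)*((m:ℝ)+2) * (Nat.factorial m : ℝ) := by
  rw [show m+2 = (m+1)+1 from by omega, fcast (m+1), fe1 m]
  push_cast; ring

lemma fe3 (m : ℕ) : ((Nat.factorial (m+3) : ℝ)) = ((m:ℝ)+1)*((m:ℝ)+2)*((m:ℝ)+3) * (Nat.factorial m : ℝ) := by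
  rw [show m+3 = (m+2)+1 from by omega, fcast (m+2), fe2 m]
  push_cast; ring

lemma fe4 (m : ℕ) : ((Nat.factorial (m+4) : ℝ)) = ((m:ℝ)+1)*((m:ℝ)+2)*((m:ℝ)+3)*((m:ℝ)+4) * (Nat.factorial m : ℝ) := by
  rw [show m+4 = (m+3)+1 from by omega, fcast (m+3), fe3 m]
  push_cast; ring

lemma fe5 (m : ℕ) : ((Nat.factorial (m+5) : ℝ)) = ((m:ℝ)+1)*((m:ℝ)+2)*((m:ℝ)+3)*((m:ℝ)+4)*((m:ℝ)+5) * (Nat.factorial m : ℝ) := by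
  rw [show m+5 = (m+4)+1 from by omega, fcast (m+4), fe4 m]
  push_cast; ring

lemma fe6 (m : ℕ) : ((Nat.factorial (m+6) : ℝ)) = ((m:ℝ)+1)*((m:ℝ)+2)*((m:ℝ)+3)*((m:ℝ)+4)*((m:ℝ)+5)*((m:ℝ)+6) * (Nat.factorial m : ℝ) := by
  rw [show m+6 = (m+5)+1 from by omega, fcast (m+5), fe5 m]
  push_cast; ring

lemma fe7 (m : ℕ) : ((Nat.factorial (m+7) : ℝ)) = ((m:ℝ)+1)*((m:ℝ)+2)*((m:ℝ)+3)*((m:ℝ)+4)*((m:ℝ)+5)*((m:ℝ)+6)*((m:ℝ)+7) * (Nat.factorial m : ℝ) := by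
  rw [show m+7 = (m+6)+1 from by omega, fcast (m+6), fe6 m]
  push_cast; ring

lemma fe8 (m : ℕ) : ((Nat.factorial (m+8) : ℝ)) = ((m:ℝ)+1)*((m:ℝ)+2)*((m:ℝ)+3)*((m:ℝ)+4)*((m:ℝ)+5)*((m:ℝ)+6)*((m:ℝ)+7)*((m:ℝ)+8) * (Nat.factorial m : ℝ) := by
  rw [show m+8 = (m+7)+1 from by omega, fcast (m+7), fe7 m]
  push_cast; ring

noncomputable def w (n : ℕ) : ℝ :=
  (Nat.factorial (4*n) : ℝ) / (Nat.factorial n * Nat.factorial (3*n+9))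

lemma w_pos (n : ℕ) : 0 < w n := by
  unfold w
  have e1 := fact_pos' (4*n)
  have e2 := fact_pos' n
  have e3 := fact_pos' (3*n+9)
  positivity
lemma Q2 (n : ℕ) : A 2 n = 2 * (4*(n:ℝ)+1) * (3*(n:ℝ)+3)*(3*(n:ℝ)+4)*(3*(n:ℝ)+5)*(3*(n:ℝ)+6)*(3*(n:ℝ)+7)*(3*(n:ℝ)+8)*(3*(n:ℝ)+9) * w n := by
  rw [A_eq 2 n (by omega)]
  unfold w
  rw [show 4*n+2-1 = 4*n+1 from by omega]
  rw [fe1 (4*n)]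
  rw [show 3*n+9 = (3*n+2)+7 from by omega, fe7 (3*n+2)]
  have e1 := (fact_pos' n).ne'
  have e2 := (fact_pos' (4*n)).ne'
  have e3 := (fact_pos' (3*n+2)).ne'
  field_simp
  push_cast; ring

lemma Q3 (n : ℕ) : A 3 n = 3 * (4*(n:ℝ)+1)*(4*(n:ℝ)+2) * (3*(n:ℝ)+4)*(3*(n:ℝ)+5)*(3*(n:ℝ)+6)*(3*(n:ℝ)+7)*(3*(n:ℝ)+8)*(3*(n:ℝ)+9) * w n := by
  rw [A_eq 3 n (by omega)]
  unfold w
  rw [show 4*n+3-1 = 4*n+2 from by omega]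
  rw [fe2 (4*n)]
  rw [show 3*n+9 = (3*n+3)+6 from by omega, fe6 (3*n+3)]
  have e1 := (fact_pos' n).ne'
  have e2 := (fact_pos' (4*n)).ne'
  have e3 := (fact_pos' (3*n+3)).ne'
  field_simp
  push_cast; ring

lemma Q4 (n : ℕ) : A 4 n = 4 * (4*(n:ℝ)+1)*(4*(n:ℝ)+2)*(4*(n:ℝ)+3) * (3*(n:ℝ)+5)*(3*(n:ℝ)+6)*(3*(n:ℝ)+7)*(3*(n:ℝ)+8)*(3*(n:ℝ)+9) * w n := by
  rw [A_eq 4 n (by omega)]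
  unfold w
  rw [show 4*n+4-1 = 4*n+3 from by omega]
  rw [fe3 (4*n)]
  rw [show 3*n+9 = (3*n+4)+5 from by omega, fe5 (3*n+4)]
  have e1 := (fact_pos' n).ne'
  have e2 := (fact_pos' (4*n)).ne'
  have e3 := (fact_pos' (3*n+4)).ne'
  field_simp
  push_cast; ring

lemma Q5 (n : ℕ) : A 5 n = 5 * (4*(n:ℝ)+1)*(4*(n:ℝ)+2)*(4*(n:ℝ)+3)*(4*(n:ℝ)+4) * (3*(n:ℝ)+6)*(3*(n:ℝ)+7)*(3*(n:ℝ)+8)*(3*(n:ℝ)+9) * w n := by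
  rw [A_eq 5 n (by omega)]
  unfold w
  rw [show 4*n+5-1 = 4*n+4 from by omega]
  rw [fe4 (4*n)]
  rw [show 3*n+9 = (3*n+5)+4 from by omega, fe4 (3*n+5)]
  have e1 := (fact_pos' n).ne'
  have e2 := (fact_pos' (4*n)).ne'
  have e3 := (fact_pos' (3*n+5)).ne'
  field_simp
  push_cast; ring

lemma Q6 (n : ℕ) : A 6 n = 6 * (4*(n:ℝ)+1)*(4*(n:ℝ)+2)*(4*(n:ℝ)+3)*(4*(n:ℝ)+4)*(4*(n:ℝ)+5) * (3*(n:ℝ)+7)*(3*(n:ℝ)+8)*(3*(n:ℝ)+9) * w n := by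
  rw [A_eq 6 n (by omega)]
  unfold w
  rw [show 4*n+6-1 = 4*n+5 from by omega]
  rw [fe5 (4*n)]
  rw [show 3*n+9 = (3*n+6)+3 from by omega, fe3 (3*n+6)]
  have e1 := (fact_pos' n).ne'
  have e2 := (fact_pos' (4*n)).ne'
  have e3 := (fact_pos' (3*n+6)).ne'
  field_simp
  push_cast; ring

lemma Q7 (n : ℕ) : A 7 n = 7 * (4*(n:ℝ)+1)*(4*(n:ℝ)+2)*(4*(n:ℝ)+3)*(4*(n:ℝ)+4)*(4*(n:ℝ)+5)*(4*(n:ℝ)+6) * (3*(n:ℝ)+8)*(3*(n:ℝ)+9) * w n := by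
  rw [A_eq 7 n (by omega)]
  unfold w
  rw [show 4*n+7-1 = 4*n+6 from by omega]
  rw [fe6 (4*n)]
  rw [show 3*n+9 = (3*n+7)+2 from by omega, fe2 (3*n+7)]
  have e1 := (fact_pos' n).ne'
  have e2 := (fact_pos' (4*n)).ne'
  have e3 := (fact_pos' (3*n+7)).ne'
  field_simp
  push_cast; ring

lemma Q8 (n : ℕ) : A 8 n = 8 * (4*(n:ℝ)+1)*(4*(n:ℝ)+2)*(4*(n:ℝ)+3)*(4*(n:ℝ)+4)*(4*(n:ℝ)+5)*(4*(n:ℝ)+6)*(4*(n:ℝ)+7) * (3*(n:ℝ)+9) * w n := by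
  rw [A_eq 8 n (by omega)]
  unfold w
  rw [show 4*n+8-1 = 4*n+7 from by omega]
  rw [fe7 (4*n)]
  rw [show 3*n+9 = (3*n+8)+1 from by omega, fe1 (3*n+8)]
  have e1 := (fact_pos' n).ne'
  have e2 := (fact_pos' (4*n)).ne'
  have e3 := (fact_pos' (3*n+8)).ne'
  field_simp
  push_cast; ring

lemma Q9 (n : ℕ) : A 9 n = 9 * (4*(n:ℝ)+1)*(4*(n:ℝ)+2)*(4*(n:ℝ)+3)*(4*(n:ℝ)+4)*(4*(n:ℝ)+5)*(4*(n:ℝ)+6)*(4*(n:ℝ)+7)*(4*(n:ℝ)+8) * w n := by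
  rw [A_eq 9 n (by omega)]
  unfold w
  rw [show 4*n+9-1 = 4*n+8 from by omega]
  rw [fe8 (4*n)]
  have e1 := (fact_pos' n).ne'
  have e2 := (fact_pos' (4*n)).ne'
  have e3 := (fact_pos' (3*n+9)).ne'
  field_simp
  push_cast; ring

noncomputable def NN (x : ℝ) : ℝ :=
  1800*x^7 + 52650*x^6 + 492930*x^5 - 355590*x^4 - 2164410*x^3 + 24300*x^2 + 1585440*x + 362880

noncomputable def DD (x : ℝ) : ℝ :=
  17496*x^7 + 231822*x^6 + 1271862*x^5 + 3715470*x^4 + 6160914*x^3 + 5662548*x^2 + 2535408*x + 362880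

lemma T_w (n : ℕ) (hn : 1 ≤ n) :
    (∑ i ∈ Finset.Ico 1 n, ∑ j ∈ Finset.Ico 1 (n - i), a i * a j * a (n - i - j))
      = NN n * w n := by
  rw [T_eq n hn, Q2, Q3, Q4, Q5, Q6, Q7, Q8, Q9]
  unfold NN
  ring

lemma a_w (n : ℕ) : a n = DD n * w n := by
  rw [ha]
  unfold u
  rw [Q2, Q3]
  unfold DD
  ring

lemma DD_pos (n : ℕ) : 0 < DD (n : ℝ) := by
  unfold DD
  positivity

lemma ratio_eq (n : ℕ) (hn : 1 ≤ n) :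
    (∑ i ∈ Finset.Ico 1 n, ∑ j ∈ Finset.Ico 1 (n - i), a i * a j * a (n - i - j)) / a n
      = NN n / DD n := by
  rw [T_w n hn, a_w n]
  rw [mul_div_mul_right _ _ (w_pos n).ne']

noncomputable def gnum (x : ℝ) : ℝ :=
  1800 + 52650*x + 492930*x^2 - 355590*x^3 - 2164410*x^4 + 24300*x^5 + 1585440*x^6 + 362880*x^7

noncomputable def gden (x : ℝ) : ℝ :=
  17496 + 231822*x + 1271862*x^2 + 3715470*x^3 + 6160914*x^4 + 5662548*x^5 + 2535408*x^6 + 362880*x^7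

lemma ratio_eq2 (n : ℕ) (hn : 1 ≤ n) :
    NN n / DD n = gnum (1/(n:ℝ)) / gden (1/(n:ℝ)) := by
  have hn0 : ((n:ℝ)) ≠ 0 := Nat.cast_ne_zero.mpr (by omega)
  have hx : ((n:ℝ))^7 ≠ 0 := pow_ne_zero _ hn0
  have hD : DD (n:ℝ) ≠ 0 := (DD_pos n).ne'
  have e1 : gnum (1/(n:ℝ)) = NN n / (n:ℝ)^7 := by
    unfold gnum NN; field_simp
  have e2 : gden (1/(n:ℝ)) = DD n / (n:ℝ)^7 := by
    unfold gden DD; field_simp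
  rw [e1, e2]
  rw [div_div_div_cancel_right₀]
  exact hx

theorem stmt11 :
    Tendsto (fun n : ℕ =>
        (∑ i ∈ Finset.Ico 1 n, ∑ j ∈ Finset.Ico 1 (n - i),
          a i * a j * a (n - i - j)) / a n)
      atTop (nhds (25 / 243)) := by
  have h1 : Tendsto (fun n : ℕ => 1/(n:ℝ)) atTop (nhds 0) :=
    tendsto_one_div_atTop_nhds_zero_nat
  have hcont : ContinuousAt (fun x : ℝ => gnum x / gden x) 0 := by
    apply ContinuousAt.div
    · unfold gnum; fun_prop
    · unfold gden; fun_prop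
    · unfold gden; norm_num
  have h2 : Tendsto (fun n : ℕ => gnum (1/(n:ℝ)) / gden (1/(n:ℝ))) atTop
      (nhds (gnum 0 / gden 0)) := (hcont.tendsto).comp h1
  have hval : gnum 0 / gden 0 = 25/243 := by unfold gnum gden; norm_num
  rw [hval] at h2
  refine h2.congr' ?_
  filter_upwards [eventually_ge_atTop 1] with n hn
  rw [← ratio_eq2 n hn, ← ratio_eq n hn]
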